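/- Let I be a two-sided ideal of a ring R. Then: (i) if R is purely infinite then so is R/I, and if R is properly purely infinite then so is R/I; (ii) if moreover I is s-unital (as a ring in its own right), then R purely infinite implies I is purely infinite, and R properly purely infinite implies I is properly purely infinite. -/

import Mathlib

/-- `x ≼ y` for square matrices over a (possibly nonunital) ring: `x = α * y * β`
for some rectangular matrices `α`, `β`. -/
def MatSub {R : Type*} [NonUnitalRing R] {k n : ℕ}
    (x : Matrix (Fin k) (Fin k) R) (y : Matrix (Fin n) (Fin n) R) : Prop :=
  ∃ (α : Matrix (Fin k) (Fin n) R) (β : Matrix (Fin n) (Fin k) R), x = α * y * β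

/-- `a ⊕ b ≼ c` for ring elements: the block-diagonal matrix `diag(a, b)` satisfies
`diag(a,b) ≼ (c)` as square matrices. -/
def PairSub {R : Type*} [NonUnitalRing R] (a b c : R) : Prop :=
  MatSub !![a, 0; 0, b] !![c]

/-- `a ≼ b` for ring elements: `a = α * b * β` for some ring elements. -/
def ElemSub {R : Type*} [NonUnitalRing R] (a b : R) : Prop :=
  ∃ α β : R, a = α * b * β

/-- `K(a) = { x | a ⊕ x ≼ a }`. -/
def KSet {R : Type*} [NonUnitalRing R] (a : R) : Set R := { x | PairSub a x a }

/-- An element `a` is infinite if `a ⊕ x ≼ a` for some nonzero `x`, i.e. `K(a) ≠ 0`. -/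
def IsInfiniteElem {R : Type*} [NonUnitalRing R] (a : R) : Prop :=
  ∃ x : R, x ≠ 0 ∧ PairSub a x a

/-- An element `a` is properly infinite if `a ≠ 0` and `a ⊕ a ≼ a`. -/
def IsProperlyInfiniteElem {R : Type*} [NonUnitalRing R] (a : R) : Prop :=
  a ≠ 0 ∧ PairSub a a a

/-- A ring is s-unital if each element `x` admits `u, v` with `u * x = x` and `x * v = x`. -/
def IsSUnitalRing (R : Type*) [NonUnitalRing R] : Prop :=
  ∀ x : R, (∃ u : R, u * x = x) ∧ (∃ v : R, x * v = x)

/-- `b` belongs to `RaR`, the set of finite sums `Σ xᵢ * a * yᵢ`. -/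
def MemRaR {R : Type*} [NonUnitalRing R] (a b : R) : Prop :=
  ∃ (n : ℕ) (x y : Fin n → R), b = ∑ i, x i * a * y i

/-- A (possibly nonunital) ring is a division ring: it has a nonzero multiplicative identity
with respect to which every nonzero element is two-sided invertible. -/
def IsDivisionRingPred (R : Type*) [NonUnitalRing R] : Prop :=
  ∃ u : R, u ≠ 0 ∧ (∀ x : R, u * x = x ∧ x * u = x) ∧
    ∀ x : R, x ≠ 0 → ∃ y : R, x * y = u ∧ y * x = u

/-- A ring `R` is purely infinite if no quotient of `R` by a two-sided ideal is a division
ring, and `b ∈ RaR` implies `b = x * a * y` for some `x, y ∈ R`. -/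
def IsPurelyInfiniteRing (R : Type*) [NonUnitalRing R] : Prop :=
  (∀ I : TwoSidedIdeal R, ¬ IsDivisionRingPred I.ringCon.Quotient) ∧
  ∀ a b : R, MemRaR a b → ElemSub b a

/-- A ring is properly purely infinite if every nonzero element is properly infinite. -/
def IsProperlyPurelyInfiniteRing (R : Type*) [NonUnitalRing R] : Prop :=
  ∀ a : R, a ≠ 0 → IsProperlyInfiniteElem a

/-- An idempotent `e` is infinite if `e ∼ f ≤ e` for some idempotent `f ≠ e`. -/
def IsInfiniteIdem {R : Type*} [NonUnitalRing R] (e : R) : Prop :=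
  IsIdempotentElem e ∧ ∃ f : R, IsIdempotentElem f ∧ (∃ x y : R, e = x * y ∧ f = y * x) ∧
    e * f = f ∧ f * e = f ∧ f ≠ e

/-- An exchange ring: for each `x` there are an idempotent `e` and elements `r, s` with
`e = x * r = x + s - x * s`. -/
def IsExchangeRing (R : Type*) [NonUnitalRing R] : Prop :=
  ∀ x : R, ∃ e r s : R, IsIdempotentElem e ∧ e = x * r ∧ e = x + s - x * s

/-- A ring has local units if every finite subset is contained in a corner `eRe`
for some idempotent `e`. -/
def HasLocalUnits (R : Type*) [NonUnitalRing R] : Prop :=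
  ∀ s : Finset R, ∃ e : R, IsIdempotentElem e ∧ ∀ x ∈ s, ∃ r : R, x = e * r * e

set_option linter.unreachableTactic false
set_option linter.unusedTactic false
set_option linter.deprecated false

lemma pairSub_iff' {R : Type*} [NonUnitalRing R] (a b c : R) :
    PairSub a b c ↔ ∃ p q r s : R,
      a = p * c * r ∧ (0:R) = p * c * s ∧ (0:R) = q * c * r ∧ b = q * c * s := by
  constructor
  · rintro ⟨α, β, h⟩
    have h' := fun i j => Matrix.ext_iff.mpr h i j
    refine ⟨α 0 0, α 1 0, β 0 0, β 0 1, ?_, ?_, ?_, ?_⟩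
    · simpa [Matrix.mul_apply, Fin.sum_univ_succ, mul_assoc] using h' 0 0
    · simpa [Matrix.mul_apply, Fin.sum_univ_succ, mul_assoc] using h' 0 1
    · simpa [Matrix.mul_apply, Fin.sum_univ_succ, mul_assoc] using h' 1 0
    · simpa [Matrix.mul_apply, Fin.sum_univ_succ, mul_assoc] using h' 1 1
  · rintro ⟨p, q, r, s, h1, h2, h3, h4⟩
    refine ⟨!![p; q], !![r, s], ?_⟩
    ext i j
    fin_cases i <;> fin_cases j <;>
      simp [Matrix.mul_apply, Fin.sum_univ_succ, mul_assoc] <;>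
      (rw [mul_assoc] at h1 h2 h3 h4) <;>
      first
        | exact h1 | exact h2 | exact h3 | exact h4
        | exact h1.symm | exact h2.symm | exact h3.symm | exact h4.symm

lemma divisionRingPred_pullback' {A B : Type*} [NonUnitalRing A] [NonUnitalRing B]
    (f : A → B) (hadd : ∀ x y, f (x + y) = f x + f y)
    (hmul : ∀ x y, f (x * y) = f x * f y)
    (hsurj : Function.Surjective f) (hdiv : IsDivisionRingPred B) :
    ∃ L : TwoSidedIdeal A, IsDivisionRingPred L.ringCon.Quotient := by
  have hf0 : f 0 = 0 := by
    have h := hadd 0 0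
    rw [add_zero] at h
    exact left_eq_add.mp h
  let c : RingCon A :=
    { r := fun x y => f x = f y
      iseqv := ⟨fun _ => rfl, Eq.symm, Eq.trans⟩
      add' := fun h1 h2 => by simp only [hadd]; rw [h1, h2]
      mul' := fun h1 h2 => by simp only [hmul]; rw [h1, h2] }
  have ceq : ∀ x y : A, ((x : c.Quotient) = (y : c.Quotient)) ↔ f x = f y :=
    fun x y => c.eq
  have hrep : ∀ x : c.Quotient, ((Quotient.out x : A) : c.Quotient) = x :=
    fun x => Quotient.out_eq' x
  obtain ⟨u, hu0, hid, hinv⟩ := hdiv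
  obtain ⟨a, ha⟩ := hsurj u
  refine ⟨⟨c⟩, (a : c.Quotient), ?_, ?_, ?_⟩
  · intro h
    rw [show (0 : c.Quotient) = ((0:A) : c.Quotient) from (c.coe_zero).symm, ceq, ha, hf0] at h
    exact hu0 h
  · intro x
    obtain ⟨x, rfl⟩ : ∃ y : A, (y : c.Quotient) = x := ⟨Quotient.out x, hrep x⟩
    constructor
    · rw [← c.coe_mul, ceq, hmul, ha]; exact (hid (f x)).1
    · rw [← c.coe_mul, ceq, hmul, ha]; exact (hid (f x)).2
  · intro x hx
    obtain ⟨x, rfl⟩ : ∃ y : A, (y : c.Quotient) = x := ⟨Quotient.out x, hrep x⟩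
    have hfx : f x ≠ 0 := by
      intro h
      exact hx (by
        rw [show (0 : c.Quotient) = ((0:A) : c.Quotient) from (c.coe_zero).symm, ceq, h, hf0])
    obtain ⟨y', hy1, hy2⟩ := hinv (f x) hfx
    obtain ⟨y, rfl⟩ := hsurj y'
    exact ⟨(y : c.Quotient), by rw [← c.coe_mul, ceq, hmul, hy1, ha],
      by rw [← c.coe_mul, ceq, hmul, hy2, ha]⟩


/-- Lemma 3.8 (pinftoidealquo): let `I` be a two-sided ideal of a ring `R`.
(i) If `R` is (properly) purely infinite, then so is `R/I`.
(ii) If moreover `I` is s-unital, then `R` (properly) purely infinite implies that the ring `I`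
is (properly) purely infinite. -/
theorem purelyInfinite_passes_to_quotients_and_sunital_ideals
    {R : Type*} [NonUnitalRing R] (I : TwoSidedIdeal R) :
    ((IsPurelyInfiniteRing R → IsPurelyInfiniteRing I.ringCon.Quotient) ∧
     (IsProperlyPurelyInfiniteRing R → IsProperlyPurelyInfiniteRing I.ringCon.Quotient)) ∧
    (IsSUnitalRing I →
      (IsPurelyInfiniteRing R → IsPurelyInfiniteRing I) ∧
      (IsProperlyPurelyInfiniteRing R → IsProperlyPurelyInfiniteRing I)) := by
  set Q := I.ringCon.Quotient with hQ
  have hrepQ : ∀ x : Q, ((Quotient.out x : R) : Q) = x := fun x => Quotient.out_eq' x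
  refine ⟨⟨?_, ?_⟩, ?_⟩
  · -- quotient, purely infinite
    intro hR
    constructor
    · -- no division ring quotients of Q
      intro J hdiv
      let g : R → J.ringCon.Quotient := fun r => (((r : Q)) : J.ringCon.Quotient)
      have g_add : ∀ x y : R, g (x + y) = g x + g y := fun x y => by
        show ((((x + y : R) : Q)) : J.ringCon.Quotient) = _
        rw [I.ringCon.coe_add, J.ringCon.coe_add]
      have g_mul : ∀ x y : R, g (x * y) = g x * g y := fun x y => by
        show ((((x * y : R) : Q)) : J.ringCon.Quotient) = _
        rw [I.ringCon.coe_mul, J.ringCon.coe_mul]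
      have g_surj : Function.Surjective g := fun z => by
        refine ⟨Quotient.out (Quotient.out z : Q), ?_⟩
        show ((((Quotient.out (Quotient.out z : Q) : R) : Q)) : J.ringCon.Quotient) = z
        rw [hrepQ]
        exact Quotient.out_eq' z
      obtain ⟨L, hL⟩ := divisionRingPred_pullback' g g_add g_mul g_surj hdiv
      exact hR.1 L hL
    · -- RaR condition in Q
      intro a b hab
      obtain ⟨n, x, y, hb⟩ := hab
      set aR : R := Quotient.out a with haR
      have hbR : MemRaR aR (∑ i, Quotient.out (x i) * aR * Quotient.out (y i)) :=
        ⟨n, _, _, rfl⟩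
      obtain ⟨α, β, hα⟩ := hR.2 _ _ hbR
      refine ⟨(α : Q), (β : Q), ?_⟩
      have hco : ((∑ i, Quotient.out (x i) * aR * Quotient.out (y i) : R) : Q)
          = ∑ i, x i * a * y i := by
        let φ : R →+ Q :=
          { toFun := fun r => (r : Q), map_zero' := I.ringCon.coe_zero,
            map_add' := I.ringCon.coe_add }
        show φ (∑ i, Quotient.out (x i) * aR * Quotient.out (y i)) = _
        rw [map_sum]
        refine Finset.sum_congr rfl fun i _ => ?_
        show (((Quotient.out (x i) * aR * Quotient.out (y i)) : R) : Q) = _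
        rw [I.ringCon.coe_mul, I.ringCon.coe_mul, hrepQ, hrepQ, hrepQ]
      rw [hb, ← hco, hα, I.ringCon.coe_mul, I.ringCon.coe_mul, hrepQ]
  · -- quotient, properly purely infinite
    intro hR a ha0
    set aR : R := Quotient.out a with haR
    have haR0 : aR ≠ 0 := by
      intro h
      exact ha0 (by rw [← hrepQ a, ← haR, h, I.ringCon.coe_zero])
    obtain ⟨-, hP⟩ := hR aR haR0
    obtain ⟨p, q, r, s, h1, h2, h3, h4⟩ := (pairSub_iff' _ _ _).mp hP
    refine ⟨ha0, (pairSub_iff' _ _ _).mpr ⟨(p:Q), (q:Q), (r:Q), (s:Q), ?_, ?_, ?_, ?_⟩⟩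
    · rw [← hrepQ a, ← haR, ← I.ringCon.coe_mul, ← I.ringCon.coe_mul, ← h1]
    · rw [← hrepQ a, ← haR, ← I.ringCon.coe_mul, ← I.ringCon.coe_mul, ← h2, I.ringCon.coe_zero]
    · rw [← hrepQ a, ← haR, ← I.ringCon.coe_mul, ← I.ringCon.coe_mul, ← h3, I.ringCon.coe_zero]
    · rw [← hrepQ a, ← haR, ← I.ringCon.coe_mul, ← I.ringCon.coe_mul, ← h4]
  · -- ideal part
    intro hsu
    have coe_ne : ∀ a : ↥I, a ≠ 0 → (a : R) ≠ 0 := fun a ha h => ha (Subtype.ext h)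
    constructor
    · -- purely infinite
      intro hR
      constructor
      · -- no division ring quotient of I
        intro J hdiv
        obtain ⟨u, hu0, hid, hinv⟩ := hdiv
        have hrepJ : ∀ x : J.ringCon.Quotient, ((Quotient.out x : ↥I) : J.ringCon.Quotient) = x :=
          fun x => Quotient.out_eq' x
        obtain ⟨w, hw⟩ : ∃ w : ↥I, ((w : ↥I) : J.ringCon.Quotient) = u :=
          ⟨Quotient.out u, hrepJ u⟩
        let m : R → ↥I := fun r =>
          ⟨(w:R) * r * (w:R), I.mul_mem_left _ _ w.2⟩
        let f : R → J.ringCon.Quotient := fun r => ((m r : ↥I) : J.ringCon.Quotient)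
        have hco_mul : ∀ x y : ↥I,
            ((x * y : ↥I) : J.ringCon.Quotient) = (x : J.ringCon.Quotient) * y :=
          fun x y => J.ringCon.coe_mul x y
        have hwd : ∀ d : ↥I, ((w * d : ↥I) : J.ringCon.Quotient) = d := fun d => by
          rw [hco_mul, hw]; exact (hid _).1
        have hdw : ∀ d : ↥I, ((d * w : ↥I) : J.ringCon.Quotient) = d := fun d => by
          rw [hco_mul, hw]; exact (hid _).2
        have hadd : ∀ x y : R, f (x + y) = f x + f y := fun x y => by
          have : m (x + y) = m x + m y := Subtype.ext (by
            show (w:R) * (x + y) * (w:R) = (w:R) * x * (w:R) + (w:R) * y * (w:R)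
            rw [mul_add, add_mul])
          rw [show f (x+y) = ((m (x+y) : ↥I) : J.ringCon.Quotient) from rfl, this,
            J.ringCon.coe_add]
        have hmul : ∀ x y : R, f (x * y) = f x * f y := fun x y => by
          let ax : ↥I := ⟨(w:R) * x, I.mul_mem_right _ _ w.2⟩
          let by' : ↥I := ⟨y * (w:R), I.mul_mem_left _ _ w.2⟩
          have e1 : m (x * y) = ax * by' := Subtype.ext (by
            show (w:R) * (x * y) * (w:R) = ((w:R) * x) * (y * (w:R))
            simp [mul_assoc])
          have e2 : ax * w = m x := Subtype.ext rfl
          have e3 : w * by' = m y := Subtype.ext (by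
            show (w:R) * (y * (w:R)) = (w:R) * y * (w:R)
            rw [mul_assoc])
          show ((m (x*y) : ↥I) : J.ringCon.Quotient)
            = ((m x : ↥I) : J.ringCon.Quotient) * ((m y : ↥I) : J.ringCon.Quotient)
          rw [e1, hco_mul, ← e2, ← e3, hdw, hwd]
        have hsurjf : Function.Surjective f := by
          intro z
          refine ⟨(Quotient.out z : ↥I), ?_⟩
          have e4 : m ((Quotient.out z : ↥I) : R) = w * Quotient.out z * w :=
            Subtype.ext rfl
          show ((m _ : ↥I) : J.ringCon.Quotient) = z
          rw [e4, hco_mul, hco_mul, hw, hrepJ, (hid (u * z)).2]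
          exact (hid z).1
        obtain ⟨L, hL⟩ := divisionRingPred_pullback' f hadd hmul hsurjf ⟨u, hu0, hid, hinv⟩
        exact hR.1 L hL
      · -- RaR condition in I
        intro a b hab
        obtain ⟨n, x, y, hb⟩ := hab
        have hbR : MemRaR (a : R) (b : R) := by
          refine ⟨n, fun i => (x i : R), fun i => (y i : R), ?_⟩
          rw [hb]
          push_cast
          rfl
        obtain ⟨α, β, hα⟩ := hR.2 _ _ hbR
        obtain ⟨⟨u, hu⟩, ⟨v, hv⟩⟩ := hsu b
        have hu' : (u:R) * (b:R) = (b:R) := congrArg Subtype.val hu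
        have hv' : (b:R) * (v:R) = (b:R) := congrArg Subtype.val hv
        refine ⟨⟨(u:R) * α, I.mul_mem_right _ _ u.2⟩, ⟨β * (v:R), I.mul_mem_left _ _ v.2⟩,
          Subtype.ext ?_⟩
        show (b:R) = ((u:R) * α) * (a:R) * (β * (v:R))
        calc (b:R) = (u:R) * ((b:R) * (v:R)) := by rw [hv', hu']
          _ = (u:R) * ((α * (a:R) * β) * (v:R)) := by rw [← hα]
          _ = ((u:R) * α) * (a:R) * (β * (v:R)) := by simp [mul_assoc]
    · -- properly purely infinite
      intro hR a ha0
      obtain ⟨-, hP⟩ := hR (a : R) (coe_ne a ha0)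
      obtain ⟨p, q, r, s, h1, h2, h3, h4⟩ := (pairSub_iff' _ _ _).mp hP
      obtain ⟨⟨u, hu⟩, ⟨v, hv⟩⟩ := hsu a
      have hu' : (u:R) * (a:R) = (a:R) := congrArg Subtype.val hu
      have hv' : (a:R) * (v:R) = (a:R) := congrArg Subtype.val hv
      have key : ∀ (x y t : R), t = x * (a:R) * y →
          (u:R) * (t * (v:R)) = ((u:R) * x) * (a:R) * (y * (v:R)) := by
        intro x y t ht
        rw [ht]
        simp [mul_assoc]
      have haa : (a:R) = (u:R) * ((a:R) * (v:R)) := by rw [hv', hu']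
      refine ⟨ha0, (pairSub_iff' _ _ _).mpr
        ⟨⟨(u:R)*p, I.mul_mem_right _ _ u.2⟩, ⟨(u:R)*q, I.mul_mem_right _ _ u.2⟩,
         ⟨r*(v:R), I.mul_mem_left _ _ v.2⟩, ⟨s*(v:R), I.mul_mem_left _ _ v.2⟩,
         Subtype.ext ?_, Subtype.ext ?_, Subtype.ext ?_, Subtype.ext ?_⟩⟩
      · show (a:R) = ((u:R)*p) * (a:R) * (r*(v:R))
        exact haa.trans (key p r _ h1)
      · show (0:R) = ((u:R)*p) * (a:R) * (s*(v:R))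
        calc (0:R) = (u:R) * ((0:R) * (v:R)) := by simp
          _ = _ := key p s 0 h2
      · show (0:R) = ((u:R)*q) * (a:R) * (r*(v:R))
        calc (0:R) = (u:R) * ((0:R) * (v:R)) := by simp
          _ = _ := key q r 0 h3
      · show (a:R) = ((u:R)*q) * (a:R) * (s*(v:R))
        exact haa.trans (key q s _ h4)
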